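/- Let I be a meager ideal on ω and define Ĩ = {A ⊆ ω : the restriction I↾A = {X ∈ I : X ⊆ A} is not meager in 2^A}. Then Ĩ is an ideal extending I, Ĩ is itself meager, and Ĩ is hereditarily meager: for every A ∉ Ĩ, the restriction Ĩ↾A is meager in 2^A. -/

import Mathlib

/-- An ideal on ω: contains all finite sets, downward closed, closed under unions. -/
def IsIdeal (I : Set (Set ℕ)) : Prop :=
  (∀ X : Set ℕ, X.Finite → X ∈ I) ∧
  (∀ X Y : Set ℕ, X ⊆ Y → Y ∈ I → X ∈ I) ∧
  (∀ X Y : Set ℕ, X ∈ I → Y ∈ I → X ∪ Y ∈ I)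

open Classical in
/-- The characteristic function of `X`, restricted to `A`, as a point of `2^A`. -/
noncomputable def chiA (A : Set ℕ) (X : Set ℕ) : ↥A → Bool := fun i => decide ((i : ℕ) ∈ X)

/-- A family `S` of subsets of ω is meager in `2^A`. -/
def MeagerIn (A : Set ℕ) (S : Set (Set ℕ)) : Prop := IsMeagre (chiA A '' S)

/-- The restriction `I↾A = {X ∈ I : X ⊆ A}`. -/
def restr (I : Set (Set ℕ)) (A : Set ℕ) : Set (Set ℕ) := {X ∈ I | X ⊆ A}

/-- `Ĩ = {A : I↾A is not meager in 2^A}`. -/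
def tildeM (I : Set (Set ℕ)) : Set (Set ℕ) := {A | ¬ MeagerIn A (restr I A)}

open Set

/-- cylinder determined by finitely many coordinates -/
def Cyl {ι : Type*} (D : Finset ι) (σ : ι → Bool) : Set (ι → Bool) :=
  {x | ∀ i ∈ D, x i = σ i}

lemma mem_cyl_self {ι : Type*} (D : Finset ι) (σ : ι → Bool) : σ ∈ Cyl D σ :=
  fun _ _ => rfl

lemma isOpen_cyl {ι : Type*} (D : Finset ι) (σ : ι → Bool) : IsOpen (Cyl D σ) := by
  have : Cyl D σ = ⋂ i ∈ D, {x : ι → Bool | x i = σ i} := by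
    ext x; simp [Cyl]
  rw [this]
  refine isOpen_biInter_finset fun i _ => ?_
  have h2 : {x : ι → Bool | x i = σ i} = (fun x : ι → Bool => x i) ⁻¹' ({σ i} : Set Bool) := by
    ext x; simp
  rw [h2]
  exact (continuous_apply i).isOpen_preimage _ (isOpen_discrete _)

lemma exists_cyl_subset {ι : Type*} {U : Set (ι → Bool)} (hU : IsOpen U) {x : ι → Bool}
    (hx : x ∈ U) : ∃ D : Finset ι, Cyl D x ⊆ U := by
  obtain ⟨D, u, h1, h2⟩ := isOpen_pi_iff.mp hU x hx
  refine ⟨D, fun y hy => h2 ?_⟩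
  intro i hi
  rw [hy i hi]
  exact (h1 i hi).2

lemma closed_nwd_union {X : Type*} [TopologicalSpace X] {s t : Set X}
    (hs : IsClosed s) (hs' : interior s = ∅) (ht : IsClosed t) (ht' : interior t = ∅) :
    interior (s ∪ t) = ∅ := by
  have h1 : interior (s ∪ t) \ s ⊆ interior t := by
    rw [IsOpen.subset_interior_iff (isOpen_interior.sdiff hs)]
    intro x hx
    rcases interior_subset hx.1 with h | h
    · exact absurd h hx.2
    · exact h
  have h2 : interior (s ∪ t) ⊆ s := by
    intro x hx
    by_contra hxs
    have := h1 ⟨hx, hxs⟩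
    rw [ht'] at this
    exact this
  have := interior_maximal h2 isOpen_interior
  rw [hs'] at this
  exact eq_empty_of_subset_empty this

lemma meagre_structure {X : Type*} [TopologicalSpace X] {s : Set X} (h : IsMeagre s) :
    ∃ F : ℕ → Set X, (∀ n, IsClosed (F n)) ∧ (∀ n, interior (F n) = ∅) ∧
      (∀ m n, m ≤ n → F m ⊆ F n) ∧ s ⊆ ⋃ n, F n := by
  obtain ⟨S, hnwd, hcnt, hcov⟩ := isMeagre_iff_countable_union_isNowhereDense.mp h
  have hS' : (insert (∅ : Set X) S).Countable := hcnt.insert _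
  obtain ⟨f, hf⟩ := hS'.exists_eq_range (insert_nonempty _ _)
  have hfnwd : ∀ n, IsNowhereDense (f n) := by
    intro n
    have : f n ∈ insert (∅ : Set X) S := hf ▸ mem_range_self n
    rcases this with h' | h'
    · rw [h']; exact isNowhereDense_empty
    · exact hnwd _ h'
  refine ⟨fun n => ⋃ m ∈ Finset.range (n + 1), closure (f m), ?_, ?_, ?_, ?_⟩
  · intro n
    exact (Finset.range (n + 1)).finite_toSet.isClosed_biUnion fun m _ => isClosed_closure
  · intro n
    induction n with
    | zero =>
      show interior (⋃ m ∈ Finset.range (0 + 1), closure (f m)) = ∅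
      have h0 : (⋃ m ∈ Finset.range (0 + 1), closure (f m)) = closure (f 0) := by simp
      rw [h0]
      exact hfnwd 0
    | succ n ih =>
      show interior (⋃ m ∈ Finset.range (n + 1 + 1), closure (f m)) = ∅
      have ih' : interior (⋃ m ∈ Finset.range (n + 1), closure (f m)) = ∅ := ih
      have heq : (⋃ m ∈ Finset.range (n + 1 + 1), closure (f m)) =
          (⋃ m ∈ Finset.range (n + 1), closure (f m)) ∪ closure (f (n + 1)) := by
        rw [Finset.range_add_one, Finset.set_biUnion_insert, Set.union_comm]
      rw [heq]
      exact closed_nwd_union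
        ((Finset.range (n + 1)).finite_toSet.isClosed_biUnion fun m _ => isClosed_closure)
        ih' isClosed_closure (hfnwd (n + 1))
  · intro m n hmn
    apply Set.biUnion_subset_biUnion_left
    intro k hk
    have hk' := Finset.mem_range.mp (Finset.mem_coe.mp hk)
    exact Finset.mem_coe.mpr (Finset.mem_range.mpr (by omega))
  · intro x hx
    obtain ⟨t, htS, hxt⟩ := hcov hx
    have : t ∈ range f := hf ▸ mem_insert_iff.mpr (Or.inr htS)
    obtain ⟨n, rfl⟩ := this
    exact mem_iUnion.mpr ⟨n, mem_biUnion (Finset.self_mem_range_succ n) (subset_closure hxt)⟩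
lemma chiA_eq_true {A X : Set ℕ} {i : ↥A} : chiA A X i = true ↔ (i : ℕ) ∈ X := by
  simp [chiA]

lemma chiA_eq_false {A X : Set ℕ} {i : ↥A} : chiA A X i = false ↔ (i : ℕ) ∉ X := by
  simp [chiA]

lemma nwd_isMeagre {X : Type*} [TopologicalSpace X] {t : Set X} (ht : IsNowhereDense t) :
    IsMeagre t :=
  isMeagre_iff_countable_union_isNowhereDense.mpr
    ⟨{t}, by simpa using ht, countable_singleton _, by simp⟩

lemma not_isMeagre_univ {X : Type*} [TopologicalSpace X] [BaireSpace X] [Nonempty X] :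
    ¬ IsMeagre (Set.univ : Set X) := by
  intro h
  have := dense_of_mem_residual (by simpa [IsMeagre, Set.compl_univ] using h)
  simpa using this.nonempty

/-- Easy direction of Talagrand: a disjoint family of nonempty finite subsets of `A`
such that each member of `S` contains only finitely many of them witnesses meagerness. -/
lemma meagerIn_of_family {A : Set ℕ} {S : Set (Set ℕ)} (Q : ℕ → Set ℕ)
    (hQA : ∀ k, Q k ⊆ A) (hQf : ∀ k, (Q k).Finite)
    (hdisj : ∀ k l, k ≠ l → Disjoint (Q k) (Q l))
    (hS : ∀ Z ∈ S, {k | Q k ⊆ Z}.Finite) : MeagerIn A S := by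
  classical
  set EN : ℕ → Set (↥A → Bool) :=
    fun N => {x | ∀ k, N ≤ k → ∃ i : ↥A, (i : ℕ) ∈ Q k ∧ x i = false} with hEN
  have hclosed : ∀ N, IsClosed (EN N) := by
    intro N
    have heq : EN N = ⋂ k, ⋂ (_ : N ≤ k),
        ⋃ i ∈ {i : ↥A | (i : ℕ) ∈ Q k}, {x : ↥A → Bool | x i = false} := by
      ext x
      simp [hEN]
    rw [heq]
    refine isClosed_iInter fun k => isClosed_iInter fun _ => ?_
    refine Set.Finite.isClosed_biUnion ((hQf k).preimage Subtype.val_injective.injOn) ?_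
    intro i _
    have h2 : {x : ↥A → Bool | x i = false} =
        (fun x : ↥A → Bool => x i) ⁻¹' ({false} : Set Bool) := by ext x; simp
    rw [h2]
    exact (isClosed_discrete _).preimage (continuous_apply i)
  have hint : ∀ N, interior (EN N) = ∅ := by
    intro N
    rw [Set.eq_empty_iff_forall_notMem]
    intro x hx
    obtain ⟨D, hD⟩ := exists_cyl_subset isOpen_interior hx
    -- find k ≥ N with Q k disjoint from the (finitely many) coordinates in D
    have hfin : {k | ∃ a ∈ Q k, a ∈ Subtype.val '' (D : Set ↥A)}.Finite := by
      have hsub : {k | ∃ a ∈ Q k, a ∈ Subtype.val '' (D : Set ↥A)} ⊆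
          ⋃ a ∈ Subtype.val '' (D : Set ↥A), {k | a ∈ Q k} := by
        intro k ⟨a, ha, haD⟩
        exact Set.mem_biUnion haD ha
      refine Set.Finite.subset (Set.Finite.biUnion (D.finite_toSet.image _) ?_) hsub
      intro a _
      refine Set.Subsingleton.finite ?_
      intro k1 h1 k2 h2
      by_contra hne
      exact Set.disjoint_left.mp (hdisj k1 k2 hne) h1 h2
    obtain ⟨k, hk⟩ := ((hfin.union (Set.finite_le_nat N)).infinite_compl).nonempty
    simp only [Set.compl_union, Set.mem_inter_iff, Set.mem_compl_iff, Set.mem_setOf_eq,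
      not_exists, not_le] at hk
    obtain ⟨hkD, hkN⟩ := hk
    set y : ↥A → Bool := fun i => if i ∈ D then x i else true with hy
    have hyE : y ∈ EN N := hD (fun i hi => by simp [hy, hi]) |> interior_subset
    obtain ⟨i, hiQ, hifalse⟩ := hyE k (by omega)
    by_cases hiD : i ∈ D
    · exact hkD (i : ℕ) ⟨hiQ, ⟨i, hiD, rfl⟩⟩
    · simp [hy, hiD] at hifalse
  have hcover : chiA A '' S ⊆ ⋃ N, EN N := by
    rintro _ ⟨Z, hZ, rfl⟩
    obtain ⟨N, hN⟩ := (hS Z hZ).bddAbove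
    refine Set.mem_iUnion.mpr ⟨N + 1, ?_⟩
    intro k hk
    have hnot : ¬ Q k ⊆ Z := by
      intro hsub
      have := hN hsub
      omega
    obtain ⟨a, haQ, haZ⟩ := Set.not_subset.mp hnot
    exact ⟨⟨a, hQA k haQ⟩, haQ, chiA_eq_false.mpr haZ⟩
  exact IsMeagre.mono hcover (isMeagre_iUnion fun N =>
    nwd_isMeagre (by rw [(hclosed N).isNowhereDense_iff]; exact hint N))

/-- Variant of `meagerIn_of_family` for a family indexed by an infinite set `K`. -/
lemma meagerIn_of_subfamily {A : Set ℕ} {S : Set (Set ℕ)} (K : Set ℕ) (hK : K.Infinite)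
    (Q : ℕ → Set ℕ)
    (hQA : ∀ k ∈ K, Q k ⊆ A) (hQf : ∀ k ∈ K, (Q k).Finite)
    (hdisj : ∀ k ∈ K, ∀ l ∈ K, k ≠ l → Disjoint (Q k) (Q l))
    (hS : ∀ Z ∈ S, {k | k ∈ K ∧ Q k ⊆ Z}.Finite) : MeagerIn A S := by
  classical
  set e : ℕ ↪ ↥K := hK.natEmbedding with he
  have hmem : ∀ n, ((e n : ℕ)) ∈ K := fun n => (e n).2
  refine meagerIn_of_family (fun n => Q (e n)) (fun n => hQA _ (hmem n))
    (fun n => hQf _ (hmem n)) ?_ ?_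
  · intro n m hnm
    refine hdisj _ (hmem n) _ (hmem m) ?_
    intro hval
    exact hnm (e.injective (Subtype.ext hval))
  · intro Z hZ
    have heq : {n | Q ((e n : ℕ)) ⊆ Z} ⊆
        (fun n => ((e n : ℕ))) ⁻¹' {k | k ∈ K ∧ Q k ⊆ Z} := by
      intro n hn
      exact ⟨hmem n, hn⟩
    refine Set.Finite.subset (Set.Finite.preimage ?_ (hS Z hZ)) heq
    intro n _ m _ hval
    exact e.injective (Subtype.ext hval)

/-- If `S` is not meager in `2^A`, some member of `S` contains infinitely many sets
from any disjoint finite family. -/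
lemma exists_mem_infinite {A : Set ℕ} {S : Set (Set ℕ)} (K : Set ℕ) (hK : K.Infinite)
    (Q : ℕ → Set ℕ)
    (hQA : ∀ k ∈ K, Q k ⊆ A) (hQf : ∀ k ∈ K, (Q k).Finite)
    (hdisj : ∀ k ∈ K, ∀ l ∈ K, k ≠ l → Disjoint (Q k) (Q l))
    (hnm : ¬ MeagerIn A S) : ∃ Z ∈ S, {k | k ∈ K ∧ Q k ⊆ Z}.Infinite := by
  by_contra h
  push_neg at h
  refine hnm (meagerIn_of_subfamily K hK Q hQA hQf hdisj ?_)
  intro Z hZ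
  exact h Z hZ

/-- One step of the Talagrand construction: extend a finite condition set `E` so that
every condition on `E` can be extended to a condition on `E'` avoiding `F`. -/
lemma bigstep {A : Set ℕ} {F : Set (↥A → Bool)}
    (hcl : IsClosed F) (hint : interior F = ∅) (E : Finset ↥A) :
    ∃ E' : Finset ↥A, E ⊆ E' ∧
      ∀ σ : ↥A → Bool, ∃ τ : ↥A → Bool, (∀ i ∈ E, τ i = σ i) ∧
        ∀ x : ↥A → Bool, (∀ i ∈ E', x i = τ i) → x ∉ F := by
  classical
  -- set of representatives: functions supported on E
  set T : Set (↥A → Bool) := {σ | ∀ i, i ∉ E → σ i = false} with hT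
  have hTfin : T.Finite := by
    have himg : Set.InjOn (fun σ : ↥A → Bool => fun i : ↥(E : Set ↥A) => σ i) T := by
      intro σ1 h1 σ2 h2 heq
      funext i
      by_cases hi : i ∈ E
      · exact congrFun heq ⟨i, hi⟩
      · rw [h1 i hi, h2 i hi]
    exact Set.Finite.of_finite_image (Set.toFinite _) himg
  have key : ∀ σ₀ : ↥A → Bool, ∃ D : Finset ↥A, ∃ x : ↥A → Bool,
      E ⊆ D ∧ (∀ i ∈ E, x i = σ₀ i) ∧ ∀ y, (∀ i ∈ D, y i = x i) → y ∉ F := by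
    intro σ₀
    have hne : ¬ (Cyl E σ₀ ⊆ F) := by
      intro hsub
      have : Cyl E σ₀ ⊆ interior F :=
        interior_maximal hsub (isOpen_cyl E σ₀)
      rw [hint] at this
      exact this (mem_cyl_self E σ₀)
    obtain ⟨x, hxc, hxF⟩ := Set.not_subset.mp hne
    have hopen : IsOpen (Cyl E σ₀ \ F) := (isOpen_cyl E σ₀).sdiff hcl
    obtain ⟨D, hD⟩ := exists_cyl_subset hopen ⟨hxc, hxF⟩
    refine ⟨D ∪ E, x, Finset.subset_union_right, fun i hi => hxc i hi, ?_⟩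
    intro y hy
    have : y ∈ Cyl D x := fun i hi => hy i (Finset.mem_union_left E hi)
    exact (hD this).2
  choose Dc xc hDE hagree havoid using key
  refine ⟨hTfin.toFinset.sup Dc ∪ E, Finset.subset_union_right, ?_⟩
  intro σ
  set σ₀ : ↥A → Bool := fun i => if i ∈ E then σ i else false with hσ₀
  have hσ₀T : σ₀ ∈ T := fun i hi => by simp [hσ₀, hi]
  refine ⟨xc σ₀, ?_, ?_⟩
  · intro i hi
    rw [hagree σ₀ i hi]
    simp [hσ₀, hi]
  · intro x hx
    refine havoid σ₀ x ?_
    intro i hi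
    refine hx i (Finset.mem_union_left E ?_)
    have hle : Dc σ₀ ⊆ hTfin.toFinset.sup Dc := Finset.le_sup (hTfin.mem_toFinset.mpr hσ₀T)
    exact hle hi

/-- Hard direction of Talagrand for restricted ideals: if `I↾A` is meager in `2^A`
then there is a disjoint family of finite subsets of `A` such that each member of
`I↾A` contains only finitely many of them. -/
lemma exists_family_of_meagerIn {A : Set ℕ} {I : Set (Set ℕ)} (hI : IsIdeal I)
    (hm : MeagerIn A (restr I A)) :
    ∃ Q : ℕ → Set ℕ, (∀ k, Q k ⊆ A) ∧ (∀ k, (Q k).Finite) ∧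
      (∀ k l, k ≠ l → Disjoint (Q k) (Q l)) ∧
      ∀ Z ∈ restr I A, {k | Q k ⊆ Z}.Finite := by
  classical
  obtain ⟨F, hFcl, hFint, hFmono, hFcov⟩ := meagre_structure hm
  have step : ∀ (k : ℕ) (E : Finset ↥A), ∃ E' : Finset ↥A, E ⊆ E' ∧
      ∀ σ : ↥A → Bool, ∃ τ : ↥A → Bool, (∀ i ∈ E, τ i = σ i) ∧
        ∀ x : ↥A → Bool, (∀ i ∈ E', x i = τ i) → x ∉ F k :=
    fun k E => bigstep (hFcl k) (hFint k) E
  set EE : ℕ → Finset ↥A := fun n => Nat.rec ∅ (fun k Ek => (step k Ek).choose) n with hEE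
  have hspec : ∀ k, EE k ⊆ EE (k + 1) ∧
      ∀ σ : ↥A → Bool, ∃ τ : ↥A → Bool, (∀ i ∈ EE k, τ i = σ i) ∧
        ∀ x : ↥A → Bool, (∀ i ∈ EE (k + 1), x i = τ i) → x ∉ F k :=
    fun k => (step k (EE k)).choose_spec
  have hEmono : ∀ {k l : ℕ}, k ≤ l → EE k ⊆ EE l := by
    intro k l hkl
    induction l, hkl using Nat.le_induction with
    | base => exact Finset.Subset.refl _
    | succ l hkl ih => exact ih.trans (hspec l).1
  choose g hg1 hg2 using fun k => (hspec k).2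
  refine ⟨fun k => Subtype.val '' ((EE (k + 1) : Set ↥A) \ (EE k : Set ↥A)),
    ?_, ?_, ?_, ?_⟩
  · intro k
    rintro _ ⟨i, _, rfl⟩
    exact i.2
  · intro k
    exact (((EE (k + 1)).finite_toSet.diff).image _)
  · intro k l hkl
    rw [Set.disjoint_left]
    rintro _ ⟨i, ⟨hi1, hi2⟩, rfl⟩ ⟨j, ⟨hj1, hj2⟩, hij⟩
    have hji : j = i := Subtype.ext hij
    subst hji
    rcases Nat.lt_or_ge k l with h | h
    · exact hj2 (hEmono h hi1)
    · have hlk : l < k := lt_of_le_of_ne h (Ne.symm hkl)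
      exact hi2 (hEmono hlk hj1)
  · -- main verification
    intro Z hZ
    by_contra hKinf
    replace hKinf : {k | Subtype.val '' ((EE (k + 1) : Set ↥A) \ (EE k : Set ↥A)) ⊆ Z}.Infinite :=
      hKinf
    set x : ↥A → Bool := chiA A Z with hx
    -- the property of indices used in the construction
    set Kp : ℕ → Prop := fun k => ∀ i : ↥A, i ∈ EE (k + 1) → i ∉ EE k → x i = true with hKp
    have hKKp : ∀ k, Subtype.val '' ((EE (k + 1) : Set ↥A) \ (EE k : Set ↥A)) ⊆ Z → Kp k := by
      intro k hk i hi1 hi2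
      exact chiA_eq_true.mpr (hk ⟨i, ⟨hi1, hi2⟩, rfl⟩)
    have hKpinf : {k | Kp k}.Infinite :=
      hKinf.mono (fun k hk => hKKp k hk)
    -- the recursively modified point
    set y : ℕ → ↥A → Bool := fun n => Nat.rec x
      (fun k yk => fun i => if i ∈ EE (k + 1) ∧ i ∉ EE k ∧ Kp k then g k yk i else yk i) n
      with hy
    have hysucc : ∀ k i, y (k + 1) i =
        (if i ∈ EE (k + 1) ∧ i ∉ EE k ∧ Kp k then g k (y k) i else y k i) :=
      fun k i => rfl
    have hystab : ∀ k l, k ≤ l → ∀ i ∈ EE k, y l i = y k i := by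
      intro k l hkl
      induction l, hkl using Nat.le_induction with
      | base => intro i _; rfl
      | succ l hkl ih =>
        intro i hi
        rw [hysucc l i]
        have hcond : ¬ (i ∈ EE (l + 1) ∧ i ∉ EE l ∧ Kp l) := by
          rintro ⟨_, h2, _⟩
          exact h2 (hEmono hkl hi)
        rw [if_neg hcond]
        exact ih i hi
    have hyx : ∀ l i, y l i = true → x i = true := by
      intro l
      induction l with
      | zero => intro i h; exact h
      | succ l ih =>
        intro i h
        rw [hysucc l i] at h
        by_cases hcond : i ∈ EE (l + 1) ∧ i ∉ EE l ∧ Kp l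
        · exact hcond.2.2 i hcond.1 hcond.2.1
        · rw [if_neg hcond] at h
          exact ih i h
    set x' : ↥A → Bool := fun i => if h : ∃ k, i ∈ EE k then y (Nat.find h) i else x i
      with hx'
    have hx'def : ∀ i, x' i =
        (if h : ∃ k, i ∈ EE k then y (Nat.find h) i else x i) := fun i => rfl
    have hx'E : ∀ k, ∀ i ∈ EE k, x' i = y k i := by
      intro k i hi
      have hex : ∃ m, i ∈ EE m := ⟨k, hi⟩
      rw [hx'def i, dif_pos hex]
      exact (hystab (Nat.find hex) k (Nat.find_min' hex hi) i (Nat.find_spec hex)).symm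
    have hx'x : ∀ i, x' i = true → x i = true := by
      intro i h
      rw [hx'def i] at h
      by_cases hex : ∃ k, i ∈ EE k
      · rw [dif_pos hex] at h
        exact hyx _ i h
      · rwa [dif_neg hex] at h
    have hx'F : ∀ k, Kp k → x' ∉ F k := by
      intro k hk
      refine hg2 k (y k) x' ?_
      intro i hi
      rw [hx'E (k + 1) i hi]
      by_cases hiE : i ∈ EE k
      · rw [hystab k (k + 1) (by omega) i hiE]
        exact (hg1 k (y k) i hiE).symm
      · rw [hysucc k i, if_pos ⟨hi, hiE, hk⟩]
    have hx'Fall : ∀ n, x' ∉ F n := by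
      intro n
      obtain ⟨k, hkK, hkn⟩ : ∃ k, Kp k ∧ n ≤ k := by
        obtain ⟨k, hk⟩ := (hKpinf.diff (Set.finite_le_nat n)).nonempty
        have hk2 : ¬ k ≤ n := hk.2
        exact ⟨k, hk.1, by omega⟩
      intro hmem
      exact hx'F k hkK (hFmono n k hkn hmem)
    -- but x' is the characteristic function of a member of the ideal
    set W : Set ℕ := {a | ∃ h : a ∈ A, x' ⟨a, h⟩ = true} with hW
    have hWZ : W ⊆ Z := by
      rintro a ⟨ha, hxa⟩
      exact chiA_eq_true.mp (hx'x _ hxa)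
    have hWI : W ∈ restr I A := ⟨hI.2.1 W Z hWZ hZ.1, fun a ⟨ha, _⟩ => ha⟩
    have hchiW : chiA A W = x' := by
      funext i
      by_cases h : x' i = true
      · rw [h]
        refine chiA_eq_true.mpr ⟨i.2, ?_⟩
        convert h
      · have h' : x' i = false := by
          cases hxi : x' i
          · rfl
          · exact absurd hxi h
        rw [h']
        refine chiA_eq_false.mpr ?_
        rintro ⟨ha, hxa⟩
        refine h ?_
        convert hxa
      -- done below
    have hmem : x' ∈ chiA A '' (restr I A) := ⟨W, hWI, hchiW⟩
    obtain ⟨n, hn⟩ := Set.mem_iUnion.mp (hFcov hmem)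
    exact hx'Fall n hn

lemma mem_tildeM_of_mem {I : Set (Set ℕ)} (hI : IsIdeal I) {X : Set ℕ} (hX : X ∈ I) :
    X ∈ tildeM I := by
  intro hmeag
  have himg : chiA X '' restr I X = Set.univ := by
    refine Set.eq_univ_of_forall fun f => ?_
    refine ⟨{a | ∃ h : a ∈ X, f ⟨a, h⟩ = true}, ⟨?_, fun a ⟨h, _⟩ => h⟩, ?_⟩
    · exact hI.2.1 _ X (fun a ⟨h, _⟩ => h) hX
    · funext i
      have hiff : ((i : ℕ) ∈ {a | ∃ h : a ∈ X, f ⟨a, h⟩ = true}) ↔ f i = true := by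
        constructor
        · rintro ⟨h, hf⟩
          convert hf
        · intro hf
          exact ⟨i.2, by convert hf⟩
      by_cases h : f i = true
      · rw [h]
        exact chiA_eq_true.mpr (hiff.mpr h)
      · have h' : f i = false := by
          cases hfi : f i
          · rfl
          · exact absurd hfi h
        rw [h']
        exact chiA_eq_false.mpr (fun hw => h (hiff.mp hw))
  rw [MeagerIn, himg] at hmeag
  exact not_isMeagre_univ hmeag

lemma meagerIn_mono {I : Set (Set ℕ)} (hI : IsIdeal I) {X Y : Set ℕ} (hXY : X ⊆ Y)
    (h : MeagerIn X (restr I X)) : MeagerIn Y (restr I Y) := by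
  obtain ⟨Q, hQA, hQf, hdisj, hfin⟩ := exists_family_of_meagerIn hI h
  refine meagerIn_of_family Q (fun k => (hQA k).trans hXY) hQf hdisj ?_
  intro Z hZ
  have hZX : Z ∩ X ∈ restr I X :=
    ⟨hI.2.1 _ Z Set.inter_subset_left hZ.1, Set.inter_subset_right⟩
  refine (hfin _ hZX).subset ?_
  intro k hk
  exact Set.subset_inter hk (hQA k)

lemma tildeM_union {I : Set (Set ℕ)} (hI : IsIdeal I) {X Y : Set ℕ} (hX : X ∈ tildeM I)
    (hY : Y ∈ tildeM I) : X ∪ Y ∈ tildeM I := by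
  classical
  by_contra hXY
  have hmeag : MeagerIn (X ∪ Y) (restr I (X ∪ Y)) := not_not.mp hXY
  obtain ⟨P, hPA, hPf, hdisj, hfin⟩ := exists_family_of_meagerIn hI hmeag
  set Q : ℕ → Set ℕ := fun k => P k ∩ X with hQ
  set R : ℕ → Set ℕ := fun k => P k \ X with hR
  have hY' : Y \ X ∈ tildeM I := by
    intro hmeagY'
    exact hY (meagerIn_mono hI Set.diff_subset hmeagY')
  have hRsub : ∀ k, R k ⊆ Y \ X := by
    intro k a ha
    exact ⟨(hPA k ha.1).resolve_left ha.2, ha.2⟩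
  have hPQR : ∀ k, P k ⊆ Q k ∪ R k := by
    intro k a ha
    by_cases hx : a ∈ X
    · exact Or.inl ⟨ha, hx⟩
    · exact Or.inr ⟨ha, hx⟩
  rcases Set.finite_or_infinite {k | (Q k).Nonempty} with hKQ | hKQ
  · refine hY' (meagerIn_of_subfamily {k | (Q k).Nonempty}ᶜ hKQ.infinite_compl P
      ?_ (fun k _ => hPf k) (fun k _ l _ hne => hdisj k l hne) ?_)
    · intro k hk a ha
      have hax : a ∉ X := fun hx => hk ⟨a, ⟨ha, hx⟩⟩
      exact ⟨(hPA k ha).resolve_left hax, hax⟩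
    · intro Z hZ
      have hZA : Z ∈ restr I (X ∪ Y) :=
        ⟨hZ.1, hZ.2.trans (Set.diff_subset.trans Set.subset_union_right)⟩
      exact (hfin Z hZA).subset (fun k hk => hk.2)
  · obtain ⟨Z₁, hZ₁, hM₁⟩ := exists_mem_infinite {k | (Q k).Nonempty} hKQ Q
      (fun k _ => Set.inter_subset_right) (fun k _ => (hPf k).subset Set.inter_subset_left)
      (fun k _ l _ hne => (hdisj k l hne).mono Set.inter_subset_left Set.inter_subset_left)
      hX
    set M1 : Set ℕ := {k | k ∈ {k | (Q k).Nonempty} ∧ Q k ⊆ Z₁} with hM1def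
    have hZ₁A : Z₁ ∈ restr I (X ∪ Y) := ⟨hZ₁.1, hZ₁.2.trans Set.subset_union_left⟩
    rcases Set.finite_or_infinite {k | k ∈ M1 ∧ (R k).Nonempty} with hM' | hM'
    · have hdiff : (M1 \ {k | k ∈ M1 ∧ (R k).Nonempty}).Infinite := hM₁.diff hM'
      have hsub : (M1 \ {k | k ∈ M1 ∧ (R k).Nonempty}) ⊆ {k | P k ⊆ Z₁} := by
        rintro k ⟨hk1, hk2⟩
        intro a ha
        rcases hPQR k ha with h | h
        · exact hk1.2 h
        · exact absurd (fun _ => hk2 ⟨hk1, ⟨a, h⟩⟩) (fun h' => h' trivial)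
      exact (hfin Z₁ hZ₁A).not_infinite (hdiff.mono hsub)
    · obtain ⟨Z₂, hZ₂, hM₂⟩ := exists_mem_infinite {k | k ∈ M1 ∧ (R k).Nonempty} hM' R
        (fun k _ => hRsub k) (fun k _ => (hPf k).subset Set.diff_subset)
        (fun k _ l _ hne => (hdisj k l hne).mono Set.diff_subset Set.diff_subset)
        hY'
      have hZU : Z₁ ∪ Z₂ ∈ restr I (X ∪ Y) := by
        refine ⟨hI.2.2 _ _ hZ₁.1 hZ₂.1, ?_⟩
        refine Set.union_subset (hZ₁.2.trans Set.subset_union_left) ?_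
        exact hZ₂.2.trans (Set.diff_subset.trans Set.subset_union_right)
      have hsub : {k | k ∈ {k | k ∈ M1 ∧ (R k).Nonempty} ∧ R k ⊆ Z₂} ⊆
          {k | P k ⊆ Z₁ ∪ Z₂} := by
        rintro k ⟨⟨hk1, _⟩, hk2⟩
        intro a ha
        rcases hPQR k ha with h | h
        · exact Or.inl (hk1.2 h)
        · exact Or.inr (hk2 h)
      exact (hfin _ hZU).not_infinite (hM₂.mono hsub)

lemma hered_tildeM {I : Set (Set ℕ)} (hI : IsIdeal I) {A : Set ℕ} (hA : A ∉ tildeM I) :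
    MeagerIn A (restr (tildeM I) A) := by
  have hmeag : MeagerIn A (restr I A) := not_not.mp hA
  obtain ⟨P, hPA, hPf, hdisj, hfin⟩ := exists_family_of_meagerIn hI hmeag
  refine meagerIn_of_family P hPA hPf hdisj ?_
  intro B hB
  by_contra hKfin
  replace hKfin : {k | P k ⊆ B}.Infinite := hKfin
  refine hB.1 (meagerIn_of_subfamily {k | P k ⊆ B} hKfin P (fun k hk => hk)
    (fun k _ => hPf k) (fun k _ l _ hne => hdisj k l hne) ?_)
  intro Z hZ
  have hZA : Z ∈ restr I A := ⟨hZ.1, hZ.2.trans hB.2⟩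
  exact (hfin Z hZA).subset (fun k hk => hk.2)

/-- For a meager ideal `I`, the family `Ĩ = {A : I↾A not meager}` is an ideal extending
`I`, it is meager, and it is hereditarily meager. -/
theorem tilde_of_meager_ideal (I : Set (Set ℕ)) (hI : IsIdeal I)
    (hm : MeagerIn Set.univ I) :
    IsIdeal (tildeM I) ∧ I ⊆ tildeM I ∧ MeagerIn Set.univ (tildeM I) ∧
    ∀ A : Set ℕ, A ∉ tildeM I → MeagerIn A (restr (tildeM I) A) := by
  have hmem : ∀ X ∈ I, X ∈ tildeM I := fun X hX => mem_tildeM_of_mem hI hX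
  refine ⟨⟨fun X hX => hmem X (hI.1 X hX),
    fun X Y hXY hYt hXm => hYt (meagerIn_mono hI hXY hXm),
    fun X Y hX hY => tildeM_union hI hX hY⟩, fun X hX => hmem X hX, ?_, fun A hA => hered_tildeM hI hA⟩
  have hres : restr I Set.univ = I := by
    ext Z
    simp [restr]
  have huniv : Set.univ ∉ tildeM I := by
    intro h
    refine h ?_
    rw [hres]
    exact hm
  have hH := hered_tildeM hI huniv
  have h2 : restr (tildeM I) Set.univ = tildeM I := by
    ext Z
    simp [restr]
  rwa [h2] at hH
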